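/- For every natural number n ≥ 2 there exist finite sets A, B ⊆ ℝ and a set G ⊆ A × B such that |G| = 2n², |A +_G B| = n, and |A ·_G B| = n. In particular, max{|A +_G B|, |A ·_G B|} = |G|^(1/2) / √2. -/
import Mathlib

noncomputable def xr (i j : ℕ) : ℝ :=
  ((i : ℝ) + Real.sqrt ((i : ℝ) ^ 2 + 4 * ((j : ℝ) + 1))) / 2

noncomputable def yr (i j : ℕ) : ℝ := (i : ℝ) - xr i j

lemma pt_sum (i j : ℕ) : xr i j + yr i j = (i : ℝ) := by simp [yr]

lemma disc_pos (i j : ℕ) : 0 < (i : ℝ) ^ 2 + 4 * ((j : ℝ) + 1) := by positivity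

lemma pt_prod (i j : ℕ) : xr i j * yr i j = -((j : ℝ) + 1) := by
  have h : Real.sqrt ((i : ℝ) ^ 2 + 4 * ((j : ℝ) + 1)) ^ 2
      = (i : ℝ) ^ 2 + 4 * ((j : ℝ) + 1) :=
    Real.sq_sqrt (disc_pos i j).le
  unfold yr xr
  nlinarith [h]

lemma pt_gt (i j : ℕ) : yr i j < xr i j := by
  have h : 0 < Real.sqrt ((i : ℝ) ^ 2 + 4 * ((j : ℝ) + 1)) :=
    Real.sqrt_pos.2 (disc_pos i j)
  unfold yr xr
  linarith

lemma pt_inj : Function.Injective (fun p : ℕ × ℕ => (xr p.1 p.2, yr p.1 p.2)) := by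
  intro p q h
  simp only [Prod.mk.injEq] at h
  obtain ⟨h1, h2⟩ := h
  have hs : ((p.1 : ℝ)) = (q.1 : ℝ) := by
    rw [← pt_sum p.1 p.2, ← pt_sum q.1 q.2, h1, h2]
  have hp : -((p.2 : ℝ) + 1) = -((q.2 : ℝ) + 1) := by
    rw [← pt_prod p.1 p.2, ← pt_prod q.1 q.2, h1, h2]
  have e1 : p.1 = q.1 := Nat.cast_injective hs
  have e2 : p.2 = q.2 := by
    have : ((p.2 : ℝ)) = (q.2 : ℝ) := by linarith
    exact Nat.cast_injective this
  exact Prod.ext e1 e2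

lemma pt_inj' : Function.Injective (fun p : ℕ × ℕ => (yr p.1 p.2, xr p.1 p.2)) := by
  intro p q h
  simp only [Prod.mk.injEq] at h
  exact pt_inj (by simp only [Prod.mk.injEq]; exact ⟨h.2, h.1⟩)

theorem trivial_bound_is_tight (n : ℕ) (hn : 2 ≤ n) :
    ∃ (A B : Finset ℝ) (G : Finset (ℝ × ℝ)), G ⊆ A ×ˢ B ∧
      G.card = 2 * n ^ 2 ∧
      (G.image (fun p => p.1 + p.2)).card = n ∧
      (G.image (fun p => p.1 * p.2)).card = n ∧
      ((max (G.image (fun p => p.1 + p.2)).card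
            (G.image (fun p => p.1 * p.2)).card : ℕ) : ℝ) =
        (G.card : ℝ) ^ ((1 : ℝ) / 2) / Real.sqrt 2 := by
  have hn0 : 0 < n := by omega
  set D : Finset (ℕ × ℕ) := Finset.range n ×ˢ Finset.range n with hD
  set G : Finset (ℝ × ℝ) :=
    D.image (fun p => (xr p.1 p.2, yr p.1 p.2)) ∪
    D.image (fun p => (yr p.1 p.2, xr p.1 p.2)) with hG
  have hGcard : G.card = 2 * n ^ 2 := by
    have hdisj : Disjoint (D.image (fun p => (xr p.1 p.2, yr p.1 p.2)))
        (D.image (fun p => (yr p.1 p.2, xr p.1 p.2))) := by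
      rw [Finset.disjoint_left]
      rintro z hz1 hz2
      simp only [Finset.mem_image] at hz1 hz2
      obtain ⟨p, -, hp⟩ := hz1
      obtain ⟨q, -, hq⟩ := hz2
      have h1 : z.2 < z.1 := by rw [← hp]; exact pt_gt p.1 p.2
      have h2 : z.1 < z.2 := by rw [← hq]; exact pt_gt q.1 q.2
      linarith
    rw [hG, Finset.card_union_of_disjoint hdisj,
      Finset.card_image_of_injective _ pt_inj,
      Finset.card_image_of_injective _ pt_inj', hD,
      Finset.card_product, Finset.card_range]
    ring
  have hsum : (G.image (fun p => p.1 + p.2)).card = n := by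
    have himg : G.image (fun p => p.1 + p.2) = (Finset.range n).image (fun i : ℕ => (i : ℝ)) := by
      ext x
      simp only [hG, Finset.image_union, Finset.mem_union, Finset.image_image,
        Finset.mem_image, hD, Finset.mem_product, Finset.mem_range, Function.comp]
      constructor
      · rintro (⟨p, ⟨hp1, hp2⟩, hp⟩ | ⟨p, ⟨hp1, hp2⟩, hp⟩)
        · exact ⟨p.1, hp1, by rw [← hp]; exact (pt_sum p.1 p.2).symm⟩
        · exact ⟨p.1, hp1, by rw [← hp, add_comm]; exact (pt_sum p.1 p.2).symm⟩
      · rintro ⟨i, hi, rfl⟩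
        exact Or.inl ⟨(i, 0), ⟨hi, hn0⟩, (pt_sum i 0)⟩
    rw [himg, Finset.card_image_of_injective _ Nat.cast_injective, Finset.card_range]
  have hprod : (G.image (fun p => p.1 * p.2)).card = n := by
    have himg : G.image (fun p => p.1 * p.2)
        = (Finset.range n).image (fun j : ℕ => -((j : ℝ) + 1)) := by
      ext x
      simp only [hG, Finset.image_union, Finset.mem_union, Finset.image_image,
        Finset.mem_image, hD, Finset.mem_product, Finset.mem_range, Function.comp]
      constructor
      · rintro (⟨p, ⟨hp1, hp2⟩, hp⟩ | ⟨p, ⟨hp1, hp2⟩, hp⟩)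
        · exact ⟨p.2, hp2, by rw [← hp]; exact (pt_prod p.1 p.2).symm⟩
        · exact ⟨p.2, hp2, by rw [← hp, mul_comm]; exact (pt_prod p.1 p.2).symm⟩
      · rintro ⟨j, hj, rfl⟩
        exact Or.inl ⟨(0, j), ⟨hn0, hj⟩, (pt_prod 0 j)⟩
    have hinj : Function.Injective (fun j : ℕ => -((j : ℝ) + 1)) := by
      intro a b h
      have : ((a : ℝ)) = b := by dsimp at h; linarith
      exact Nat.cast_injective this
    rw [himg, Finset.card_image_of_injective _ hinj, Finset.card_range]
  refine ⟨G.image Prod.fst, G.image Prod.snd, G, ?_, hGcard, hsum, hprod, ?_⟩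
  · intro g hg
    exact Finset.mem_product.2 ⟨Finset.mem_image_of_mem _ hg, Finset.mem_image_of_mem _ hg⟩
  · rw [hsum, hprod, hGcard, max_self]
    have h2 : (0:ℝ) ≤ 2 := by norm_num
    have hx : ((2 * n ^ 2 : ℕ) : ℝ) = 2 * (n:ℝ) ^ 2 := by push_cast; ring
    rw [hx, ← Real.sqrt_eq_rpow, Real.sqrt_mul h2, Real.sqrt_sq (by positivity : (0:ℝ) ≤ (n:ℝ))]
    field_simp
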